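/- Let S be a finite subset of ℝ, Λ a finite index set, and P a probability measure on S^Λ with full support. Suppose that for every site i ∈ Λ and configurations ξ ≤ ξ', the single-site conditional distribution of P at i given ξ is stochastically dominated by that given ξ'. Then P has positive correlations: for any two bounded monotone functions f, g : S^Λ → ℝ, ∫ fg dP ≥ (∫ f dP)(∫ g dP). -/

import Mathlib

open Finset Function

set_option linter.unusedSectionVars false

section
variable {Λ : Type*} [Fintype Λ] [DecidableEq Λ] {S : Finset ℝ}

noncomputable def fkgZ (P : (Λ → S) → ℝ) (i : Λ) (ξ : Λ → S) : ℝ :=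
  ∑ s : S, P (update ξ i s)

noncomputable def fkgK (P : (Λ → S) → ℝ) (i : Λ) (F : (Λ → S) → ℝ) (ξ : Λ → S) : ℝ :=
  ∑ s : S, P (update ξ i s) / fkgZ P i ξ * F (update ξ i s)

variable {P : (Λ → S) → ℝ}

theorem fkg_update_le_update {i : Λ} {ξ ξ' : Λ → S} {s s' : S}
    (h : ξ ≤ ξ') (hs : s ≤ s') : update ξ i s ≤ update ξ' i s' := by
  intro j
  by_cases hj : j = i
  · subst hj; simp [hs]
  · simpa [update_of_ne hj] using h j

theorem fkgZ_pos [Nonempty S] (hP : ∀ ξ, 0 < P ξ) (i : Λ) (ξ : Λ → S) :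
    0 < fkgZ P i ξ :=
  Finset.sum_pos (fun s _ => hP _) univ_nonempty

theorem fkgZ_update (i : Λ) (ξ : Λ → S) (t : S) :
    fkgZ P i (update ξ i t) = fkgZ P i ξ := by
  simp [fkgZ, Function.update_idem]

theorem fkgK_eq (i : Λ) (F : (Λ → S) → ℝ) (ξ : Λ → S) :
    fkgK P i F ξ = (∑ s : S, P (update ξ i s) * F (update ξ i s)) / fkgZ P i ξ := by
  rw [Finset.sum_div]
  exact Finset.sum_congr rfl fun s _ => by rw [div_mul_eq_mul_div]

theorem fkg_pi_nonneg [Nonempty S] (hP : ∀ ξ, 0 < P ξ) (i : Λ) (ξ : Λ → S) (s : S) :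
    0 ≤ P (update ξ i s) / fkgZ P i ξ :=
  le_of_lt (div_pos (hP _) (fkgZ_pos hP i ξ))

theorem fkg_pi_sum_one [Nonempty S] (hP : ∀ ξ, 0 < P ξ) (i : Λ) (ξ : Λ → S) :
    ∑ s : S, P (update ξ i s) / fkgZ P i ξ = 1 := by
  rw [← Finset.sum_div]
  exact div_self (ne_of_gt (fkgZ_pos hP i ξ))

/-- stationarity of the heat-bath kernel -/
theorem fkgK_stationary [Nonempty S] (hP : ∀ ξ, 0 < P ξ) (i : Λ) (F : (Λ → S) → ℝ) :
    ∑ ξ : Λ → S, P ξ * fkgK P i F ξ = ∑ ξ : Λ → S, P ξ * F ξ := by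
  classical
  have hinv : Function.Involutive
      (fun p : (Λ → S) × S => ((update p.1 i p.2 : Λ → S), p.1 i)) := by
    intro p
    simp [Function.update_idem, Function.update_eq_self]
  calc ∑ ξ : Λ → S, P ξ * fkgK P i F ξ
      = ∑ p : (Λ → S) × S,
        P p.1 * (P (update p.1 i p.2) / fkgZ P i p.1 * F (update p.1 i p.2)) := by
        rw [Fintype.sum_prod_type]
        simp [fkgK, Finset.mul_sum]
    _ = ∑ p : (Λ → S) × S,
        P (update p.1 i p.2) * (P p.1 / fkgZ P i p.1 * F p.1) := by
        rw [← Equiv.sum_comp (hinv.toPerm)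
          (fun p : (Λ → S) × S => P (update p.1 i p.2) * (P p.1 / fkgZ P i p.1 * F p.1))]
        refine Fintype.sum_congr _ _ fun p => ?_
        simp only [Involutive.coe_toPerm]
        rw [Function.update_idem, Function.update_eq_self, fkgZ_update]
    _ = ∑ ξ : Λ → S, P ξ * F ξ := by
        rw [Fintype.sum_prod_type]
        refine Fintype.sum_congr _ _ fun ξ => ?_
        show (∑ y : S, P (update ξ i y) * (P ξ / fkgZ P i ξ * F ξ)) = P ξ * F ξ
        rw [← Finset.sum_mul,
          show (∑ y : S, P (update ξ i y)) = fkgZ P i ξ from rfl]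
        have hZ := fkgZ_pos hP i ξ
        field_simp

theorem fkg_chebyshev' {ι : Type*} [Fintype ι] [LinearOrder ι]
    (w a b : ι → ℝ) (hw : ∀ s, 0 ≤ w s) (hw1 : ∑ s, w s = 1)
    (ha : Monotone a) (hb : Monotone b) :
    (∑ s, w s * a s) * (∑ s, w s * b s) ≤ ∑ s, w s * (a s * b s) := by
  have key : 0 ≤ ∑ s, ∑ t, w s * w t * ((a s - a t) * (b s - b t)) := by
    refine Finset.sum_nonneg fun s _ => Finset.sum_nonneg fun t _ => ?_
    rcases le_total s t with h | h
    · have h1 := ha h; have h2 := hb h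
      exact mul_nonneg (mul_nonneg (hw s) (hw t))
        (mul_nonneg_of_nonpos_of_nonpos (by linarith) (by linarith))
    · have h1 := ha h; have h2 := hb h
      exact mul_nonneg (mul_nonneg (hw s) (hw t))
        (mul_nonneg (by linarith) (by linarith))
  have expand : ∑ s, ∑ t, w s * w t * ((a s - a t) * (b s - b t))
      = 2 * (∑ s, w s * (a s * b s)) - 2 * ((∑ s, w s * a s) * (∑ s, w s * b s)) := by
    have hterm : ∀ s t : ι, w s * w t * ((a s - a t) * (b s - b t))
        = (w s * (a s * b s)) * w t + w s * (w t * (a t * b t))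
          - (w s * a s) * (w t * b t) - (w s * b s) * (w t * a t) := by
      intro s t; ring
    simp only [hterm]
    simp only [Finset.sum_sub_distrib, Finset.sum_add_distrib, ← Finset.mul_sum,
      ← Finset.sum_mul, hw1]
    ring_nf
  linarith

/-- the kernel preserves monotonicity (attractiveness) -/
theorem fkgK_monotone [Nonempty S] (hP : ∀ ξ, 0 < P ξ)
    (hcond : ∀ (i : Λ) (ξ ξ' : Λ → S), ξ ≤ ξ' →
      ∀ g : S → ℝ, Monotone g →
        (∑ s : S, P (Function.update ξ i s) * g s) /
          (∑ s : S, P (Function.update ξ i s)) ≤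
        (∑ s : S, P (Function.update ξ' i s) * g s) /
          (∑ s : S, P (Function.update ξ' i s)))
    (i : Λ) {F : (Λ → S) → ℝ} (hF : Monotone F) : Monotone (fkgK P i F) := by
  intro ξ ξ' h
  rw [fkgK_eq, fkgK_eq]
  have step1 : (∑ s : S, P (update ξ i s) * F (update ξ i s)) / fkgZ P i ξ ≤
      (∑ s : S, P (update ξ' i s) * F (update ξ i s)) / fkgZ P i ξ' :=
    hcond i ξ ξ' h (fun s => F (update ξ i s))
      (fun s s' hs => hF (fkg_update_le_update le_rfl hs))
  refine step1.trans ?_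
  have hnum : (∑ s : S, P (update ξ' i s) * F (update ξ i s)) ≤
      ∑ s : S, P (update ξ' i s) * F (update ξ' i s) :=
    Finset.sum_le_sum fun s _ =>
      mul_le_mul_of_nonneg_left (hF (fkg_update_le_update h le_rfl)) (hP _).le
  gcongr
  exact (fkgZ_pos hP i ξ').le

theorem fkgK_nonneg [Nonempty S] (hP : ∀ ξ, 0 < P ξ) (i : Λ)
    {F : (Λ → S) → ℝ} (hF : ∀ η, 0 ≤ F η) (ξ : Λ → S) : 0 ≤ fkgK P i F ξ :=
  Finset.sum_nonneg fun s _ => mul_nonneg (fkg_pi_nonneg hP i ξ s) (hF _)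

theorem fkgK_le [Nonempty S] (hP : ∀ ξ, 0 < P ξ) (i : Λ)
    {F : (Λ → S) → ℝ} {M : ℝ} (hF : ∀ η, F η ≤ M) (ξ : Λ → S) : fkgK P i F ξ ≤ M := by
  calc fkgK P i F ξ ≤ ∑ s : S, P (update ξ i s) / fkgZ P i ξ * M :=
        Finset.sum_le_sum fun s _ =>
          mul_le_mul_of_nonneg_left (hF _) (fkg_pi_nonneg hP i ξ s)
    _ = M := by rw [← Finset.sum_mul, fkg_pi_sum_one hP, one_mul]

theorem fkgK_ge [Nonempty S] (hP : ∀ ξ, 0 < P ξ) (i : Λ)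
    {F : (Λ → S) → ℝ} {m : ℝ} (hF : ∀ η, m ≤ F η) (ξ : Λ → S) : m ≤ fkgK P i F ξ := by
  calc m = ∑ s : S, P (update ξ i s) / fkgZ P i ξ * m := by
        rw [← Finset.sum_mul, fkg_pi_sum_one hP, one_mul]
    _ ≤ fkgK P i F ξ :=
        Finset.sum_le_sum fun s _ =>
          mul_le_mul_of_nonneg_left (hF _) (fkg_pi_nonneg hP i ξ s)

/-- pointwise conditional Chebyshev -/
theorem fkgK_mul_le [Nonempty S] (hP : ∀ ξ, 0 < P ξ) (i : Λ)
    {F G : (Λ → S) → ℝ} (hF : Monotone F) (hG : Monotone G) (ξ : Λ → S) :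
    fkgK P i F ξ * fkgK P i G ξ ≤ fkgK P i (fun η => F η * G η) ξ :=
  fkg_chebyshev' (fun s => P (update ξ i s) / fkgZ P i ξ)
    (fun s => F (update ξ i s)) (fun s => G (update ξ i s))
    (fkg_pi_nonneg hP i ξ) (fkg_pi_sum_one hP i ξ)
    (fun s s' hs => hF (fkg_update_le_update le_rfl hs))
    (fun s s' hs => hG (fkg_update_le_update le_rfl hs))

/-- one-step decrease of the correlation -/
theorem fkgK_step [Nonempty S] (hP : ∀ ξ, 0 < P ξ) (i : Λ)
    {F G : (Λ → S) → ℝ} (hF : Monotone F) (hG : Monotone G) :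
    ∑ ξ : Λ → S, P ξ * (fkgK P i F ξ * fkgK P i G ξ) ≤
      ∑ ξ : Λ → S, P ξ * (F ξ * G ξ) := by
  calc ∑ ξ : Λ → S, P ξ * (fkgK P i F ξ * fkgK P i G ξ)
      ≤ ∑ ξ : Λ → S, P ξ * fkgK P i (fun η => F η * G η) ξ :=
        Finset.sum_le_sum fun ξ _ =>
          mul_le_mul_of_nonneg_left (fkgK_mul_le hP i hF hG ξ) (hP ξ).le
    _ = ∑ ξ : Λ → S, P ξ * (F ξ * G ξ) := fkgK_stationary hP i _

noncomputable def fkgT (P : (Λ → S) → ℝ) (l : List Λ) (F : (Λ → S) → ℝ) : (Λ → S) → ℝ :=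
  l.foldr (fkgK P) F

@[simp] theorem fkgT_nil (F : (Λ → S) → ℝ) : fkgT P [] F = F := rfl
@[simp] theorem fkgT_cons (i : Λ) (l : List Λ) (F : (Λ → S) → ℝ) :
    fkgT P (i :: l) F = fkgK P i (fkgT P l F) := rfl

theorem fkgT_stationary [Nonempty S] (hP : ∀ ξ, 0 < P ξ) (l : List Λ) (F : (Λ → S) → ℝ) :
    ∑ ξ : Λ → S, P ξ * fkgT P l F ξ = ∑ ξ : Λ → S, P ξ * F ξ := by
  induction l with
  | nil => rfl
  | cons i l ih => rw [fkgT_cons, fkgK_stationary hP, ih]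

theorem fkgT_monotone [Nonempty S] (hP : ∀ ξ, 0 < P ξ)
    (hcond : ∀ (i : Λ) (ξ ξ' : Λ → S), ξ ≤ ξ' →
      ∀ g : S → ℝ, Monotone g →
        (∑ s : S, P (Function.update ξ i s) * g s) /
          (∑ s : S, P (Function.update ξ i s)) ≤
        (∑ s : S, P (Function.update ξ' i s) * g s) /
          (∑ s : S, P (Function.update ξ' i s)))
    (l : List Λ) {F : (Λ → S) → ℝ} (hF : Monotone F) : Monotone (fkgT P l F) := by
  induction l with
  | nil => exact hF
  | cons i l ih => exact fkgK_monotone hP hcond i ih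

theorem fkgT_le [Nonempty S] (hP : ∀ ξ, 0 < P ξ) (l : List Λ)
    {F : (Λ → S) → ℝ} {M : ℝ} (hF : ∀ η, F η ≤ M) : ∀ ξ, fkgT P l F ξ ≤ M := by
  induction l with
  | nil => exact hF
  | cons i l ih => exact fkgK_le hP i ih

theorem fkgT_ge [Nonempty S] (hP : ∀ ξ, 0 < P ξ) (l : List Λ)
    {F : (Λ → S) → ℝ} {m : ℝ} (hF : ∀ η, m ≤ F η) : ∀ ξ, m ≤ fkgT P l F ξ := by
  induction l with
  | nil => exact hF
  | cons i l ih => exact fkgK_ge hP i ih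

theorem fkgT_step [Nonempty S] (hP : ∀ ξ, 0 < P ξ)
    (hcond : ∀ (i : Λ) (ξ ξ' : Λ → S), ξ ≤ ξ' →
      ∀ g : S → ℝ, Monotone g →
        (∑ s : S, P (Function.update ξ i s) * g s) /
          (∑ s : S, P (Function.update ξ i s)) ≤
        (∑ s : S, P (Function.update ξ' i s) * g s) /
          (∑ s : S, P (Function.update ξ' i s)))
    (l : List Λ) {F G : (Λ → S) → ℝ} (hF : Monotone F) (hG : Monotone G) :
    ∑ ξ : Λ → S, P ξ * (fkgT P l F ξ * fkgT P l G ξ) ≤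
      ∑ ξ : Λ → S, P ξ * (F ξ * G ξ) := by
  induction l with
  | nil => exact le_rfl
  | cons i l ih =>
      refine le_trans ?_ ih
      exact fkgK_step hP i (fkgT_monotone hP hcond l hF) (fkgT_monotone hP hcond l hG)

/-- linearity with constants -/
theorem fkgK_add_const [Nonempty S] (hP : ∀ ξ, 0 < P ξ) (i : Λ)
    (F : (Λ → S) → ℝ) (cst : ℝ) (ξ : Λ → S) :
    fkgK P i (fun η => F η + cst) ξ = fkgK P i F ξ + cst := by
  unfold fkgK
  simp only [mul_add, Finset.sum_add_distrib, ← Finset.sum_mul, fkg_pi_sum_one hP, one_mul]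

theorem fkgT_add_const [Nonempty S] (hP : ∀ ξ, 0 < P ξ) (l : List Λ)
    (F : (Λ → S) → ℝ) (cst : ℝ) (ξ : Λ → S) :
    fkgT P l (fun η => F η + cst) ξ = fkgT P l F ξ + cst := by
  induction l generalizing ξ with
  | nil => rfl
  | cons i l ih =>
      rw [fkgT_cons, fkgT_cons, show fkgT P l (fun η => F η + cst) = fun η => fkgT P l F η + cst
        from funext fun η => ih η, fkgK_add_const hP]

/-- Doeblin-type minorization along a sweep -/
theorem fkgT_minorize [Nonempty S] (hP : ∀ ξ, 0 < P ξ)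
    {c : ℝ} (hc0 : 0 ≤ c)
    (hc : ∀ (i : Λ) (ξ : Λ → S) (s : S), c ≤ P (update ξ i s) / fkgZ P i ξ)
    (l : List Λ) {F : (Λ → S) → ℝ} (hF : ∀ η, 0 ≤ F η) :
    ∀ ξ η : Λ → S, (∀ j, j ∉ l → ξ j = η j) → c ^ l.length * F η ≤ fkgT P l F ξ := by
  induction l with
  | nil =>
      intro ξ η hag
      have : ξ = η := funext fun j => hag j List.not_mem_nil
      simp [this]
  | cons i l ih =>
      intro ξ η hag
      have hξ' : ∀ j, j ∉ l → (update ξ i (η i)) j = η j := by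
        intro j hj
        by_cases hji : j = i
        · subst hji; simp
        · rw [update_of_ne hji]
          exact hag j (by simp [hji, hj])
      have hTnn : ∀ ζ, 0 ≤ fkgT P l F ζ := fkgT_ge hP l hF
      calc c ^ (i :: l).length * F η = c * (c ^ l.length * F η) := by
            rw [List.length_cons]; ring
        _ ≤ (P (update ξ i (η i)) / fkgZ P i ξ) * fkgT P l F (update ξ i (η i)) := by
            have h1 := ih (update ξ i (η i)) η hξ'
            exact mul_le_mul (hc i ξ (η i)) h1
              (mul_nonneg (pow_nonneg hc0 _) (hF η)) (fkg_pi_nonneg hP i ξ (η i))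
        _ ≤ fkgK P i (fkgT P l F) ξ := by
            refine Finset.single_le_sum (f := fun s : S =>
              P (update ξ i s) / fkgZ P i ξ * fkgT P l F (update ξ i s)) ?_ (mem_univ (η i))
            intro s _
            exact mul_nonneg (fkg_pi_nonneg hP i ξ s) (hTnn _)
        _ = fkgT P (i :: l) F ξ := rfl

theorem fkgK_const_sub [Nonempty S] (hP : ∀ ξ, 0 < P ξ) (i : Λ)
    (F : (Λ → S) → ℝ) (cst : ℝ) (ξ : Λ → S) :
    fkgK P i (fun η => cst - F η) ξ = cst - fkgK P i F ξ := by
  unfold fkgK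
  simp only [mul_sub, Finset.sum_sub_distrib, ← Finset.sum_mul, fkg_pi_sum_one hP, one_mul]

theorem fkgT_const_sub [Nonempty S] (hP : ∀ ξ, 0 < P ξ) (l : List Λ)
    (F : (Λ → S) → ℝ) (cst : ℝ) (ξ : Λ → S) :
    fkgT P l (fun η => cst - F η) ξ = cst - fkgT P l F ξ := by
  induction l generalizing ξ with
  | nil => rfl
  | cons i l ih =>
      rw [fkgT_cons, fkgT_cons, show fkgT P l (fun η => cst - F η)
        = fun η => cst - fkgT P l F η from funext fun η => ih η, fkgK_const_sub hP]

theorem fkgT_sub_const [Nonempty S] (hP : ∀ ξ, 0 < P ξ) (l : List Λ)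
    (F : (Λ → S) → ℝ) (cst : ℝ) (ξ : Λ → S) :
    fkgT P l (fun η => F η - cst) ξ = fkgT P l F ξ - cst := by
  rw [show (fun η => F η - cst) = fun η => F η + (-cst) from funext fun η => by ring,
    fkgT_add_const hP, sub_eq_add_neg]

theorem fkgT_osc [Nonempty S] (hP : ∀ ξ, 0 < P ξ) (l : List Λ)
    (hne : (Finset.univ : Finset (Λ → S)).Nonempty)
    {δ : ℝ} (hδ0 : 0 ≤ δ)
    (hmin : ∀ F : (Λ → S) → ℝ, (∀ η, 0 ≤ F η) → ∀ ξ η, δ * F η ≤ fkgT P l F ξ)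
    (F : (Λ → S) → ℝ) :
    Finset.univ.sup' hne (fkgT P l F) - Finset.univ.inf' hne (fkgT P l F) ≤
      (1 - 2 * δ) * (Finset.univ.sup' hne F - Finset.univ.inf' hne F) := by
  set m := Finset.univ.inf' hne F with hm
  set M := Finset.univ.sup' hne F with hM
  have hub : ∀ η, F η ≤ M := fun η => Finset.le_sup' F (mem_univ η)
  have hlb : ∀ η, m ≤ F η := fun η => Finset.inf'_le F (mem_univ η)
  obtain ⟨ηM, -, hηM⟩ := Finset.exists_mem_eq_sup' hne F
  obtain ⟨ηm, -, hηm⟩ := Finset.exists_mem_eq_inf' hne F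
  have hup : ∀ ξ, fkgT P l F ξ ≤ M - δ * (M - m) := by
    intro ξ
    have h1 := hmin (fun η => M - F η) (fun η => sub_nonneg.2 (hub η)) ξ ηm
    rw [fkgT_const_sub hP] at h1
    rw [← hηm] at h1
    linarith
  have hdown : ∀ ξ, m + δ * (M - m) ≤ fkgT P l F ξ := by
    intro ξ
    have h1 := hmin (fun η => F η - m) (fun η => sub_nonneg.2 (hlb η)) ξ ηM
    rw [fkgT_sub_const hP] at h1
    rw [← hηM] at h1
    linarith
  have h2 : Finset.univ.sup' hne (fkgT P l F) ≤ M - δ * (M - m) :=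
    Finset.sup'_le hne _ fun ξ _ => hup ξ
  have h3 : m + δ * (M - m) ≤ Finset.univ.inf' hne (fkgT P l F) :=
    Finset.le_inf' hne _ fun ξ _ => hdown ξ
  nlinarith [h2, h3]
end

open Filter Topology in
/-- **FKG-type consequence of Holley's inequality.** If the single-site conditional
distributions of a fully supported probability measure `P` on `S^Λ` are stochastically
increasing in the boundary configuration, then `P` has positive correlations: any two
(automatically bounded) monotone functions are positively correlated. -/
theorem positive_correlations_of_monotone_conditionals
    {Λ : Type*} [Fintype Λ] [DecidableEq Λ] [Nonempty Λ]
    (S : Finset ℝ) (hS : S.Nonempty)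
    (P : (Λ → S) → ℝ)
    (hPpos : ∀ ξ, 0 < P ξ)
    (hPsum : ∑ ξ : Λ → S, P ξ = 1)
    (hcond : ∀ (i : Λ) (ξ ξ' : Λ → S), ξ ≤ ξ' →
      ∀ g : S → ℝ, Monotone g →
        (∑ s : S, P (Function.update ξ i s) * g s) /
          (∑ s : S, P (Function.update ξ i s)) ≤
        (∑ s : S, P (Function.update ξ' i s) * g s) /
          (∑ s : S, P (Function.update ξ' i s))) :
    ∀ f g : (Λ → S) → ℝ, Monotone f → Monotone g →
      (∑ ξ : Λ → S, P ξ * f ξ) * (∑ ξ : Λ → S, P ξ * g ξ) ≤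
        ∑ ξ : Λ → S, P ξ * (f ξ * g ξ) := by
  intro f g hf hg
  classical
  haveI : Nonempty S := hS.to_subtype
  have hne : (Finset.univ : Finset (Λ → S)).Nonempty := Finset.univ_nonempty
  set l := (Finset.univ : Finset Λ).toList with hldef
  have hlmem : ∀ j : Λ, j ∈ l := fun j => Finset.mem_toList.2 (Finset.mem_univ j)
  have hneP : (Finset.univ : Finset (Λ × (Λ → S) × S)).Nonempty := Finset.univ_nonempty
  set c := Finset.univ.inf' hneP
    (fun p : Λ × (Λ → S) × S => P (Function.update p.2.1 p.1 p.2.2) / fkgZ P p.1 p.2.1)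
    with hcdef
  have hc0 : 0 < c :=
    (Finset.lt_inf'_iff hneP).2 fun p _ => div_pos (hPpos _) (fkgZ_pos hPpos _ _)
  have hc : ∀ (i : Λ) (ξ : Λ → S) (s : S), c ≤ P (Function.update ξ i s) / fkgZ P i ξ :=
    fun i ξ s => Finset.inf'_le _ (Finset.mem_univ (i, ξ, s))
  set δ := min (c ^ l.length) (1/2) with hδdef
  have hδ0 : 0 < δ := lt_min (pow_pos hc0 _) (by norm_num)
  have hδh : δ ≤ 1/2 := min_le_right _ _
  have hmin : ∀ F : (Λ → S) → ℝ, (∀ η, 0 ≤ F η) → ∀ ξ η, δ * F η ≤ fkgT P l F ξ := by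
    intro F hF ξ η
    refine le_trans (mul_le_mul_of_nonneg_right (min_le_left _ _) (hF η)) ?_
    exact fkgT_minorize hPpos hc0.le hc l hF ξ η (fun j hj => absurd (hlmem j) hj)
  set r := 1 - 2*δ with hrdef
  have hr0 : 0 ≤ r := by rw [hrdef]; linarith
  have hr1 : r < 1 := by rw [hrdef]; linarith
  set T := fkgT P l with hT
  set F := fun t : ℕ => T^[t] f with hFdef
  set G := fun t : ℕ => T^[t] g with hGdef
  have hFs : ∀ t, F (t+1) = T (F t) := fun t => Function.iterate_succ_apply' T t f
  have hGs : ∀ t, G (t+1) = T (G t) := fun t => Function.iterate_succ_apply' T t g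
  have hFmono : ∀ t, Monotone (F t) := by
    intro t; induction t with
    | zero => exact hf
    | succ t ih => rw [hFs]; exact fkgT_monotone hPpos hcond l ih
  have hGmono : ∀ t, Monotone (G t) := by
    intro t; induction t with
    | zero => exact hg
    | succ t ih => rw [hGs]; exact fkgT_monotone hPpos hcond l ih
  set Ef := ∑ ξ : Λ → S, P ξ * f ξ with hEfdef
  set Eg := ∑ ξ : Λ → S, P ξ * g ξ with hEgdef
  have hEF : ∀ t, ∑ ξ : Λ → S, P ξ * F t ξ = Ef := by
    intro t; induction t with
    | zero => rfl
    | succ t ih => rw [hFs, hT, fkgT_stationary hPpos, ih]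
  have hEG : ∀ t, ∑ ξ : Λ → S, P ξ * G t ξ = Eg := by
    intro t; induction t with
    | zero => rfl
    | succ t ih => rw [hGs, hT, fkgT_stationary hPpos, ih]
  have hcorr : ∀ t, ∑ ξ : Λ → S, P ξ * (F t ξ * G t ξ) ≤ ∑ ξ : Λ → S, P ξ * (f ξ * g ξ) := by
    intro t; induction t with
    | zero => exact le_rfl
    | succ t ih =>
        rw [hFs, hGs, hT]
        exact le_trans (fkgT_step hPpos hcond l (hFmono t) (hGmono t)) ih
  set Mg := Finset.univ.sup' hne (fun ξ => |g ξ|) with hMgdef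
  have hMg0 : 0 ≤ Mg := by
    have h1 := Finset.le_sup' (fun ξ : Λ → S => |g ξ|)
      (Finset.mem_univ (Classical.arbitrary (Λ → S)))
    have h2 := abs_nonneg (g (Classical.arbitrary (Λ → S)))
    rw [hMgdef]; linarith
  have hGb : ∀ t ξ, |G t ξ| ≤ Mg := by
    intro t; induction t with
    | zero => exact fun ξ => Finset.le_sup' (fun ξ : Λ → S => |g ξ|) (Finset.mem_univ ξ)
    | succ t ih =>
        intro ξ; rw [hGs, hT]
        exact abs_le.2 ⟨fkgT_ge hPpos l (fun η => (abs_le.1 (ih η)).1) ξ,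
          fkgT_le hPpos l (fun η => (abs_le.1 (ih η)).2) ξ⟩
  have hosc0 : ∀ H : (Λ → S) → ℝ, 0 ≤ Finset.univ.sup' hne H - Finset.univ.inf' hne H := by
    intro H
    have h1 := Finset.inf'_le H (Finset.mem_univ (Classical.arbitrary (Λ → S)))
    have h2 := Finset.le_sup' H (Finset.mem_univ (Classical.arbitrary (Λ → S)))
    linarith
  have hoscF : ∀ t, Finset.univ.sup' hne (F t) - Finset.univ.inf' hne (F t) ≤
      r ^ t * (Finset.univ.sup' hne f - Finset.univ.inf' hne f) := by
    intro t; induction t with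
    | zero => rw [pow_zero, one_mul]; exact le_rfl
    | succ t ih =>
        rw [hFs, hT]
        calc Finset.univ.sup' hne (fkgT P l (F t)) - Finset.univ.inf' hne (fkgT P l (F t))
            ≤ (1 - 2*δ) * (Finset.univ.sup' hne (F t) - Finset.univ.inf' hne (F t)) :=
              fkgT_osc hPpos l hne hδ0.le hmin (F t)
          _ ≤ r * (r ^ t * (Finset.univ.sup' hne f - Finset.univ.inf' hne f)) := by
              rw [← hrdef]; exact mul_le_mul_of_nonneg_left ih hr0
          _ = r ^ (t+1) * (Finset.univ.sup' hne f - Finset.univ.inf' hne f) := by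
              rw [pow_succ]; ring
  have hEbound : ∀ t ξ, |F t ξ - Ef| ≤
      Finset.univ.sup' hne (F t) - Finset.univ.inf' hne (F t) := by
    intro t ξ
    have hEf' : ∑ η : Λ → S, P η * F t η = Ef := hEF t
    have hub : ∑ η : Λ → S, P η * F t η ≤ Finset.univ.sup' hne (F t) := by
      calc ∑ η : Λ → S, P η * F t η
          ≤ ∑ η : Λ → S, P η * Finset.univ.sup' hne (F t) :=
            Finset.sum_le_sum fun η _ =>
              mul_le_mul_of_nonneg_left (Finset.le_sup' _ (Finset.mem_univ η)) (hPpos η).le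
        _ = Finset.univ.sup' hne (F t) := by rw [← Finset.sum_mul, hPsum, one_mul]
    have hlbE : Finset.univ.inf' hne (F t) ≤ ∑ η : Λ → S, P η * F t η := by
      calc Finset.univ.inf' hne (F t)
          = ∑ η : Λ → S, P η * Finset.univ.inf' hne (F t) := by
            rw [← Finset.sum_mul, hPsum, one_mul]
        _ ≤ ∑ η : Λ → S, P η * F t η :=
            Finset.sum_le_sum fun η _ =>
              mul_le_mul_of_nonneg_left (Finset.inf'_le _ (Finset.mem_univ η)) (hPpos η).le
    have h1 : F t ξ ≤ Finset.univ.sup' hne (F t) := Finset.le_sup' _ (Finset.mem_univ ξ)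
    have h2 : Finset.univ.inf' hne (F t) ≤ F t ξ := Finset.inf'_le _ (Finset.mem_univ ξ)
    rw [← hEf']
    exact abs_le.2 ⟨by linarith, by linarith⟩
  have main : ∀ t, Ef * Eg - r ^ t *
      ((Finset.univ.sup' hne f - Finset.univ.inf' hne f) * Mg) ≤
      ∑ ξ : Λ → S, P ξ * (f ξ * g ξ) := by
    intro t
    set osct := Finset.univ.sup' hne (F t) - Finset.univ.inf' hne (F t) with hosct
    have h1 : ∑ ξ : Λ → S, P ξ * ((F t ξ - Ef) * G t ξ)
        = ∑ ξ : Λ → S, P ξ * (F t ξ * G t ξ) - Ef * Eg := by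
      rw [Finset.sum_congr rfl (fun ξ _ => show P ξ * ((F t ξ - Ef) * G t ξ)
        = P ξ * (F t ξ * G t ξ) - Ef * (P ξ * G t ξ) from by ring),
        Finset.sum_sub_distrib, ← Finset.mul_sum, hEG t]
    have h2 : -(osct * Mg) ≤ ∑ ξ : Λ → S, P ξ * ((F t ξ - Ef) * G t ξ) := by
      calc -(osct * Mg) = ∑ ξ : Λ → S, P ξ * (-(osct * Mg)) := by
            rw [← Finset.sum_mul, hPsum, one_mul]
        _ ≤ ∑ ξ : Λ → S, P ξ * ((F t ξ - Ef) * G t ξ) := by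
            refine Finset.sum_le_sum fun ξ _ => mul_le_mul_of_nonneg_left ?_ (hPpos ξ).le
            have habs : |(F t ξ - Ef) * G t ξ| ≤ osct * Mg := by
              rw [abs_mul]
              exact mul_le_mul (hEbound t ξ) (hGb t ξ) (abs_nonneg _) (hosc0 (F t))
            linarith [neg_abs_le ((F t ξ - Ef) * G t ξ)]
    have h3 := hcorr t
    have h4 : osct * Mg ≤ r ^ t * ((Finset.univ.sup' hne f - Finset.univ.inf' hne f) * Mg) := by
      have h5 := mul_le_mul_of_nonneg_right (hoscF t) hMg0
      calc osct * Mg ≤ r ^ t * (Finset.univ.sup' hne f - Finset.univ.inf' hne f) * Mg := h5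
        _ = r ^ t * ((Finset.univ.sup' hne f - Finset.univ.inf' hne f) * Mg) := by ring
    linarith
  have hlim : Tendsto (fun t : ℕ => Ef * Eg - r ^ t *
      ((Finset.univ.sup' hne f - Finset.univ.inf' hne f) * Mg)) atTop (nhds (Ef * Eg)) := by
    have h0 : Tendsto (fun t : ℕ => r ^ t) atTop (nhds 0) :=
      tendsto_pow_atTop_nhds_zero_of_lt_one hr0 hr1
    have h1 := (h0.mul_const ((Finset.univ.sup' hne f - Finset.univ.inf' hne f) * Mg)).const_sub
      (Ef * Eg)
    simpa using h1
  exact le_of_tendsto hlim (Filter.Eventually.of_forall main)
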